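/- Let 0 → M →^i E →^p G → 1 be an extension with abelian kernel, N ⊴ G, and H a partial semi-direct complement of N in E. The restriction p|_{N_E(H)} : N_E(H) → G is surjective if and only if for every e ∈ E there exists m ∈ M with eHe⁻¹ = i(m) H i(m)⁻¹. -/

import Mathlib

lemma conj_map_eq_of_mem_normalizer {E : Type*} [Group E] {H : Subgroup E} {x : E}
    (hx : x ∈ Subgroup.normalizer (H : Set E)) :
    Subgroup.map (MulAut.conj x).toMonoidHom H = H := by
  ext y
  simp only [Subgroup.mem_map, MulAut.conj_apply, MulEquiv.coe_toMonoidHom]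
  constructor
  · rintro ⟨h, hh, rfl⟩
    exact (Subgroup.mem_normalizer_iff.mp hx h).mp hh
  · intro hy
    refine ⟨x⁻¹ * y * x, ?_, by group⟩
    have := (Subgroup.mem_normalizer_iff.mp ((Subgroup.normalizer (H : Set E)).inv_mem hx) y).mp hy
    simpa [mul_assoc] using this

lemma conj_map_mul {E : Type*} [Group E] (a b : E) (H : Subgroup E) :
    Subgroup.map (MulAut.conj (a * b)).toMonoidHom H
      = Subgroup.map (MulAut.conj a).toMonoidHom
          (Subgroup.map (MulAut.conj b).toMonoidHom H) := by
  rw [Subgroup.map_map]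
  congr 1
  ext y
  simp [mul_assoc]

/-- For an extension `0 → M →ⁱ E →ᵖ G → 1` with abelian kernel, `N ⊴ G`, and a
partial semi-direct complement `H` of `N` in `E`, the restriction `p|_{N_E(H)} : N_E(H) → G`
is surjective iff every `E`-conjugate of `H` is `i(M)`-conjugate to `H`. -/
theorem normalizer_surjective_iff_invariant (M E G : Type*) [CommGroup M] [Group E] [Group G]
    (i : M →* E) (p : E →* G) (hi : Function.Injective i) (hp : Function.Surjective p)
    (hex : i.range = p.ker)
    (N : Subgroup G) (hN : N.Normal)
    (H : Subgroup E) (hH1 : Subgroup.map p H = N) (hH2 : Set.InjOn p (H : Set E)) :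
    (∀ g : G, ∃ x ∈ Subgroup.normalizer (H : Set E), p x = g) ↔
      (∀ e : E, ∃ m : M,
        Subgroup.map (MulAut.conj e).toMonoidHom H
          = Subgroup.map (MulAut.conj (i m)).toMonoidHom H) := by
  constructor
  · intro hsurj e
    obtain ⟨x, hx, hpx⟩ := hsurj (p e)
    have hk : e * x⁻¹ ∈ p.ker := by
      simp [MonoidHom.mem_ker, hpx]
    rw [← hex] at hk
    obtain ⟨m, hm⟩ := hk
    refine ⟨m, ?_⟩
    have he : e = i m * x := by rw [hm]; group
    rw [he, conj_map_mul, conj_map_eq_of_mem_normalizer hx]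
  · intro hconj g
    obtain ⟨e, rfl⟩ := hp g
    obtain ⟨m, hm⟩ := hconj e
    refine ⟨(i m)⁻¹ * e, ?_, ?_⟩
    · rw [Subgroup.mem_normalizer_iff]
      intro h
      constructor
      · intro hh
        have : (i m)⁻¹ * (e * h * e⁻¹) * i m ∈ H := by
          have h1 : e * h * e⁻¹ ∈ Subgroup.map (MulAut.conj (i m)).toMonoidHom H := by
            rw [← hm]
            exact ⟨h, hh, rfl⟩
          obtain ⟨h', hh', heq⟩ := h1
          simp only [MulAut.conj_apply, MulEquiv.coe_toMonoidHom] at heq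
          rw [← heq]
          simpa [mul_assoc] using hh'
        simpa [mul_assoc] using this
      · intro hh
        have h1 : i m * ((i m)⁻¹ * e * h * ((i m)⁻¹ * e)⁻¹) * (i m)⁻¹
            ∈ Subgroup.map (MulAut.conj (i m)).toMonoidHom H :=
          ⟨_, hh, rfl⟩
        rw [← hm] at h1
        obtain ⟨h', hh', heq⟩ := h1
        simp only [MulAut.conj_apply, MulEquiv.coe_toMonoidHom] at heq
        have : h = h' := by
          apply mul_left_cancel (a := e)
          apply mul_right_cancel (b := e⁻¹)
          rw [heq]; group
        rwa [this]
    · have : p (i m) = 1 := by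
        have : i m ∈ p.ker := hex ▸ ⟨m, rfl⟩
        simpa [MonoidHom.mem_ker] using this
      simp [this]
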